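/- For every n ≥ 1 there exists an orthonormal basis w₁, …, wₙ of ℝⁿ such that |⟨w_i, e_j⟩| ≤ 2/√n for all i, j, where e₁, …, eₙ is the standard basis. -/

import Mathlib

open Real Finset

private lemma walsh_cos_sum_eq_zero (n : ℕ) (θ : ℝ) (h1 : Real.sin θ ≠ 0)
    (h2 : Real.sin (2 * n * θ) = 0) :
    ∑ j ∈ Finset.range n, Real.cos ((2 * j + 1) * θ) = 0 := by
  have key : ∀ j : ℕ,
      Real.sin (2 * ((j : ℝ) + 1) * θ) - Real.sin (2 * (j : ℝ) * θ)
        = 2 * Real.sin θ * Real.cos ((2 * (j : ℝ) + 1) * θ) := by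
    intro j
    rw [Real.sin_sub_sin]
    have e1 : (2 * ((j : ℝ) + 1) * θ - 2 * (j : ℝ) * θ) / 2 = θ := by ring
    have e2 : (2 * ((j : ℝ) + 1) * θ + 2 * (j : ℝ) * θ) / 2 = (2 * (j : ℝ) + 1) * θ := by ring
    rw [e1, e2]
  have tele := Finset.sum_range_sub (fun j : ℕ => Real.sin (2 * (j : ℝ) * θ)) n
  have h3 : 2 * Real.sin θ * ∑ j ∈ Finset.range n, Real.cos ((2 * (j : ℝ) + 1) * θ) = 0 := by
    rw [Finset.mul_sum]
    calc ∑ j ∈ Finset.range n, 2 * Real.sin θ * Real.cos ((2 * (j : ℝ) + 1) * θ)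
        = ∑ j ∈ Finset.range n,
            (Real.sin (2 * ((j : ℝ) + 1) * θ) - Real.sin (2 * (j : ℝ) * θ)) := by
          refine Finset.sum_congr rfl fun j _ => (key j).symm
      _ = Real.sin (2 * (n : ℝ) * θ) - Real.sin (2 * (0 : ℕ) * θ) := by
          simpa [Nat.cast_succ] using tele
      _ = 0 := by simp [h2]
  have h4 : (2 : ℝ) * Real.sin θ ≠ 0 := by
    simp [h1]
  exact (mul_eq_zero.mp h3).resolve_left h4

private lemma walsh_aux_sum (n : ℕ) (hn : 0 < n) (m : ℤ) (hm0 : m ≠ 0)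
    (hm : |m| < 2 * n) :
    ∑ j ∈ Finset.range n, Real.cos ((2 * (j : ℝ) + 1) * ((m : ℝ) * π / (2 * n))) = 0 := by
  have hn' : (0 : ℝ) < 2 * n := by positivity
  have hmabs : |(m : ℝ)| < 2 * n := by
    have := hm
    rw [← Int.cast_abs]
    exact_mod_cast by exact_mod_cast hm
  have hθlt : (m : ℝ) * π / (2 * n) < π := by
    rw [div_lt_iff₀ hn']
    calc (m : ℝ) * π ≤ |(m : ℝ)| * π := by
          exact mul_le_mul_of_nonneg_right (le_abs_self _) Real.pi_pos.le
      _ < 2 * n * π := by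
          exact mul_lt_mul_of_pos_right hmabs Real.pi_pos
      _ = π * (2 * n) := by ring
  have hθgt : -π < (m : ℝ) * π / (2 * n) := by
    rw [lt_div_iff₀ hn']
    calc -π * (2 * n) = -(2 * n * π) := by ring
      _ < -(|(m : ℝ)| * π) := by
          exact neg_lt_neg (mul_lt_mul_of_pos_right hmabs Real.pi_pos)
      _ = -|(m : ℝ)| * π := by ring
      _ ≤ (m : ℝ) * π := mul_le_mul_of_nonneg_right (neg_abs_le _) Real.pi_pos.le
  apply walsh_cos_sum_eq_zero
  · rw [Ne, Real.sin_eq_zero_iff_of_lt_of_lt hθgt hθlt]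
    exact div_ne_zero
      (mul_ne_zero (Int.cast_ne_zero.mpr hm0) Real.pi_ne_zero) (by positivity)
  · have hne : (n : ℝ) ≠ 0 := by positivity
    have : 2 * (n : ℝ) * ((m : ℝ) * π / (2 * n)) = (m : ℝ) * π := by
      field_simp
    rw [this]
    exact Real.sin_int_mul_pi m

/-- Walsh-type basis: for every `n ≥ 1` there is an orthonormal basis `w₁,…,wₙ` of `ℝⁿ`
all of whose coordinates in the standard basis are at most `2/√n` in absolute value. -/
theorem exists_walsh_type_basis (n : ℕ) (hn : 1 ≤ n) :
    ∃ w : OrthonormalBasis (Fin n) ℝ (EuclideanSpace ℝ (Fin n)),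
      ∀ i j : Fin n, |w i j| ≤ 2 / Real.sqrt n := by
  have hn0 : 0 < n := hn
  have hnR : (0 : ℝ) < n := by exact_mod_cast hn0
  set c : ℝ := Real.sqrt (2 / n) with hc
  set v : Fin n → EuclideanSpace ℝ (Fin n) :=
    fun k => WithLp.toLp 2 fun j : Fin n => c * Real.cos ((2 * (k : ℝ) + 1) * (2 * (j : ℝ) + 1) * (π / (4 * n))) with hv
  -- product-to-sum
  have pts : ∀ A B : ℝ, Real.cos A * Real.cos B = (Real.cos (A - B) + Real.cos (A + B)) / 2 := by
    intro A B
    rw [Real.cos_sub, Real.cos_add]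
    ring
  have hsum : ∀ k l : Fin n,
      ∑ j : Fin n, Real.cos ((2 * (k : ℝ) + 1) * (2 * (j : ℝ) + 1) * (π / (4 * n)))
        * Real.cos ((2 * (l : ℝ) + 1) * (2 * (j : ℝ) + 1) * (π / (4 * n)))
        = if k = l then (n : ℝ) / 2 else 0 := by
    intro k l
    have split : ∀ j : Fin n,
        Real.cos ((2 * (k : ℝ) + 1) * (2 * (j : ℝ) + 1) * (π / (4 * n)))
          * Real.cos ((2 * (l : ℝ) + 1) * (2 * (j : ℝ) + 1) * (π / (4 * n)))
        = (Real.cos ((2 * (j : ℝ) + 1) * ((((k : ℤ) - (l : ℤ) : ℤ) : ℝ) * π / (2 * n)))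
          + Real.cos ((2 * (j : ℝ) + 1) * ((((k : ℤ) + (l : ℤ) + 1 : ℤ) : ℝ) * π / (2 * n)))) / 2 := by
      intro j
      rw [pts]
      congr 2
      · push_cast
        field_simp
        ring
      · push_cast
        field_simp
        ring
    rw [Finset.sum_congr rfl fun j _ => split j]
    rw [← Finset.sum_div, Finset.sum_add_distrib]
    have h2 : ∑ j : Fin n,
        Real.cos ((2 * (j : ℝ) + 1) * ((((k : ℤ) + (l : ℤ) + 1 : ℤ) : ℝ) * π / (2 * n))) = 0 := by
      rw [Fin.sum_univ_eq_sum_range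
        (fun j => Real.cos ((2 * (j : ℝ) + 1) * ((((k : ℤ) + (l : ℤ) + 1 : ℤ) : ℝ) * π / (2 * n))))]
      apply walsh_aux_sum n hn0
      · positivity
      · rw [abs_of_pos (by positivity)]
        have hk := k.isLt
        have hl := l.isLt
        omega
    by_cases hkl : k = l
    · subst hkl
      have h1 : ∑ j : Fin n,
          Real.cos ((2 * (j : ℝ) + 1) * ((((k : ℤ) - (k : ℤ) : ℤ) : ℝ) * π / (2 * n))) = (n : ℝ) := by
        simp
      rw [h1, h2]
      simp
    · have hd : ((k : ℤ) - (l : ℤ)) ≠ 0 := by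
        intro h
        apply hkl
        have : (k : ℤ) = (l : ℤ) := by omega
        exact Fin.ext (by exact_mod_cast this)
      have h1 : ∑ j : Fin n,
          Real.cos ((2 * (j : ℝ) + 1) * ((((k : ℤ) - (l : ℤ) : ℤ) : ℝ) * π / (2 * n))) = 0 := by
        rw [Fin.sum_univ_eq_sum_range
          (fun j => Real.cos ((2 * (j : ℝ) + 1) * ((((k : ℤ) - (l : ℤ) : ℤ) : ℝ) * π / (2 * n))))]
        apply walsh_aux_sum n hn0 _ hd
        have hk := k.isLt
        have hl := l.isLt
        rw [abs_lt]
        constructor <;> omega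
      rw [h1, h2]
      simp [hkl]
  have hc2 : c ^ 2 = 2 / n := Real.sq_sqrt (by positivity)
  have hortho : Orthonormal ℝ v := by
    rw [orthonormal_iff_ite]
    intro k l
    rw [PiLp.inner_apply]
    simp only [RCLike.inner_apply, conj_trivial, hv, PiLp.toLp_apply]
    have : ∑ j : Fin n,
        (c * Real.cos ((2 * (k : ℝ) + 1) * (2 * (j : ℝ) + 1) * (π / (4 * n))))
          * (c * Real.cos ((2 * (l : ℝ) + 1) * (2 * (j : ℝ) + 1) * (π / (4 * n))))
        = c ^ 2 * ∑ j : Fin n,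
            Real.cos ((2 * (k : ℝ) + 1) * (2 * (j : ℝ) + 1) * (π / (4 * n)))
            * Real.cos ((2 * (l : ℝ) + 1) * (2 * (j : ℝ) + 1) * (π / (4 * n))) := by
      rw [Finset.mul_sum]
      refine Finset.sum_congr rfl fun j _ => by ring
    rw [Finset.sum_congr rfl fun (j : Fin n) _ => mul_comm (c * Real.cos ((2 * (l : ℝ) + 1) * (2 * (j : ℝ) + 1) * (π / (4 * n)))) (c * Real.cos ((2 * (k : ℝ) + 1) * (2 * (j : ℝ) + 1) * (π / (4 * n))))]
    rw [this, hsum k l, hc2]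
    by_cases hkl : k = l
    · simp [hkl]
      omega
    · simp [hkl]
  have hcard : Fintype.card (Fin n) = Module.finrank ℝ (EuclideanSpace ℝ (Fin n)) := by
    simp
  haveI : Nonempty (Fin n) := ⟨⟨0, hn0⟩⟩
  let b := basisOfOrthonormalOfCardEqFinrank hortho hcard
  have hb : ⇑b = v := coe_basisOfOrthonormalOfCardEqFinrank hortho hcard
  refine ⟨b.toOrthonormalBasis (by rwa [hb]), fun i j => ?_⟩
  rw [Module.Basis.coe_toOrthonormalBasis, hb]
  have hsqrt2 : Real.sqrt 2 ≤ 2 := by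
    nlinarith [Real.sq_sqrt (show (0:ℝ) ≤ 2 by norm_num), Real.sqrt_nonneg 2]
  have hcle : c ≤ 2 / Real.sqrt n := by
    rw [hc, Real.sqrt_div (by norm_num : (0:ℝ) ≤ 2) (n : ℝ)]
    gcongr
  have hcos := Real.abs_cos_le_one ((2 * (i : ℝ) + 1) * (2 * (j : ℝ) + 1) * (π / (4 * n)))
  have h1 : |v i j| ≤ c := by
    rw [hv]
    calc |c * Real.cos ((2 * (i : ℝ) + 1) * (2 * (j : ℝ) + 1) * (π / (4 * n)))|
        = c * |Real.cos ((2 * (i : ℝ) + 1) * (2 * (j : ℝ) + 1) * (π / (4 * n)))| := by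
          rw [abs_mul, abs_of_nonneg (Real.sqrt_nonneg _)]
      _ ≤ c * 1 := mul_le_mul_of_nonneg_left hcos (Real.sqrt_nonneg _)
      _ = c := mul_one c
  exact h1.trans hcle
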